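/- In type A_ℓ, with g·d = ℓ+1 and P := conv{f^g_0, …, f^g_{g−1}} where f^g_b := (1/d) · Σ_{j ∈ {0,…,ℓ}, j ≡ b (mod g)} ϖ_j, the Ehrhart counting function of P with respect to the coweight lattice Z satisfies: #(qP ∩ Z) = 0 if d does not divide q, and #(qP ∩ Z) = binom(g − 1 + q/d, g − 1) if d divides q. Consequently, the number of lattice points in the dilated relative interior is #(qP° ∩ Z) = 0 if d ∤ q, and #(qP° ∩ Z) = (q − d)(q − 2d)⋯(q − d(g−1)) / (d^{g−1}(g−1)!) if d | q. -/

import Mathlib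

open scoped Pointwise

/-- The coweight lattice of type `A_ℓ`:
`Z = {x ∈ E : (α, x) ∈ ℤ for all roots α = e_i − e_j}`, where
`E = {x ∈ ℝ^{ℓ+1} : Σ x_i = 0}`. -/
def ZA (ℓ : ℕ) : AddSubgroup (Fin (ℓ + 1) → ℝ) where
  carrier := {x | (∑ i, x i) = 0 ∧ ∀ i j : Fin (ℓ + 1), ∃ m : ℤ, x i - x j = (m : ℝ)}
  zero_mem' := ⟨by simp, fun i j => ⟨0, by simp⟩⟩
  add_mem' := by
    rintro x y ⟨hx0, hx⟩ ⟨hy0, hy⟩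
    refine ⟨by simp [Finset.sum_add_distrib, hx0, hy0], fun i j => ?_⟩
    obtain ⟨m, hm⟩ := hx i j
    obtain ⟨m', hm'⟩ := hy i j
    exact ⟨m + m', by push_cast; simp only [Pi.add_apply]; linarith⟩
  neg_mem' := by
    rintro x ⟨hx0, hx⟩
    refine ⟨by simp [hx0], fun i j => ?_⟩
    obtain ⟨m, hm⟩ := hx i j
    exact ⟨-m, by push_cast; simp only [Pi.neg_apply]; linarith⟩

/-- The fundamental coweights of type `A_ℓ`:
`ϖ_j = (e_1 + ⋯ + e_j) − (j/(ℓ+1))(e_1 + ⋯ + e_{ℓ+1})`, with `ϖ_0 = 0`. -/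
noncomputable def varpi (ℓ j : ℕ) : Fin (ℓ + 1) → ℝ :=
  fun i => (if (i : ℕ) < j then 1 else 0) - (j : ℝ) / (ℓ + 1)

/-- `f^g_b = (1/d) Σ_{0 ≤ j ≤ ℓ, j ≡ b mod g} ϖ_j`. -/
noncomputable def fgb (ℓ g d b : ℕ) : Fin (ℓ + 1) → ℝ :=
  (d : ℝ)⁻¹ • ∑ j ∈ (Finset.range (ℓ + 1)).filter (fun j => j % g = b), varpi ℓ j


open Finset

lemma filter_mod_eq_image {ℓ g d : ℕ} (hg : 0 < g) (hgd : g * d = ℓ + 1)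
    {b : ℕ} (hb : b < g) :
    (Finset.range (ℓ + 1)).filter (fun j => j % g = b) =
      (Finset.range d).image (fun k => b + k * g) := by
  ext j
  simp only [Finset.mem_filter, Finset.mem_range, Finset.mem_image]
  constructor
  · rintro ⟨hj, hmod⟩
    refine ⟨j / g, ?_, ?_⟩
    · rw [Nat.div_lt_iff_lt_mul hg]
      have hdg : d * g = ℓ + 1 := by rw [Nat.mul_comm]; exact hgd
      omega
    · exact hmod ▸ Nat.mod_add_div' j g
  · rintro ⟨k, hk, rfl⟩
    have hkg : (k + 1) * g ≤ d * g := Nat.mul_le_mul_right _ (by omega)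
    constructor
    · have h2 : (k+1)*g = k*g + g := by ring
      have hdg : d * g = ℓ + 1 := by rw [Nat.mul_comm]; exact hgd
      omega
    · simp [Nat.add_mul_mod_self_right, Nat.mod_eq_of_lt hb]

lemma lt_iff_aux {g b a r : ℕ} (hb : b < g) (hr : r < g) (k : ℕ) :
    (a * g + r < b + k * g) ↔ (a + (if b ≤ r then 1 else 0) ≤ k) := by
  split_ifs with h
  · constructor
    · intro hlt; by_contra hk; push_neg at hk
      have : k * g ≤ a * g := Nat.mul_le_mul_right _ (by omega)
      omega
    · intro hak
      have h1 : (a + 1) * g ≤ k * g := Nat.mul_le_mul_right _ hak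
      have h2 : (a + 1) * g = a * g + g := by ring
      omega
  · push_neg at h
    constructor
    · intro hlt; by_contra hk; push_neg at hk
      have h1 : (k + 1) * g ≤ a * g := Nat.mul_le_mul_right _ (by omega)
      have h2 : (k + 1) * g = k * g + g := by ring
      omega
    · intro hak
      have : a * g ≤ k * g := Nat.mul_le_mul_right _ hak
      omega

lemma sum_range_cast (d : ℕ) (hd : 0 < d) :
    ∑ k ∈ Finset.range d, (k : ℝ) = d * ((d : ℝ) - 1) / 2 := by
  have h := Finset.sum_range_id_mul_two d
  have h2 : ((∑ i ∈ Finset.range d, i : ℕ) : ℝ) * 2 = (d : ℝ) * ((d : ℝ) - 1) := by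
    rw [← Nat.cast_ofNat (n := 2), ← Nat.cast_mul, h]
    push_cast [Nat.cast_sub (by omega : 1 ≤ d)]
    ring
  rw [Nat.cast_sum] at h2
  linarith

lemma fgb_apply {ℓ g d : ℕ} (hg : 0 < g) (hd : 0 < d) (hgd : g * d = ℓ + 1)
    {b : ℕ} (hb : b < g) (i : Fin (ℓ + 1)) :
    fgb ℓ g d b i =
      (((d : ℝ) - (↑i / g : ℕ) - (if b ≤ ↑i % g then 1 else 0)) -
        ((b : ℝ) / g + ((d : ℝ) - 1) / 2)) / d := by
  have hi : (i : ℕ) < g * d := by have := i.isLt; omega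
  have ha : (↑i / g : ℕ) < d := by
    rw [Nat.div_lt_iff_lt_mul hg]
    have : d * g = g * d := Nat.mul_comm d g
    omega
  have hgl : ((ℓ : ℝ) + 1) = (g : ℝ) * d := by exact_mod_cast hgd.symm
  rw [fgb, Pi.smul_apply, Finset.sum_apply, filter_mod_eq_image hg hgd hb,
    Finset.sum_image (by
      intro x _ y _ hxy
      exact Nat.eq_of_mul_eq_mul_right hg (by dsimp only at hxy; omega : x * g = y * g))]
  simp only [varpi]
  rw [Finset.sum_sub_distrib]
  have hcond : ∀ k : ℕ, ((i : ℕ) < b + k * g) ↔ ((↑i / g + (if b ≤ ↑i % g then 1 else 0)) ≤ k) := by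
    intro k
    conv_lhs => rw [← Nat.div_add_mod' (i : ℕ) g]
    exact lt_iff_aux hb (Nat.mod_lt _ hg) k
  have hs1 : (∑ k ∈ Finset.range d, if (i : ℕ) < b + k * g then (1 : ℝ) else 0) =
      ((d - (↑i / g + (if b ≤ ↑i % g then 1 else 0)) : ℕ) : ℝ) := by
    simp_rw [hcond]
    rw [Finset.sum_boole]
    congr 1
    have : (Finset.range d).filter (fun k => (↑i / g + (if b ≤ ↑i % g then 1 else 0)) ≤ k) =
        Finset.Ico (↑i / g + (if b ≤ ↑i % g then 1 else 0)) d := by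
      ext x; simp only [Finset.mem_filter, Finset.mem_range, Finset.mem_Ico]; omega
    rw [this, Nat.card_Ico]
  have hs2 : (∑ k ∈ Finset.range d, ((b + k * g : ℕ) : ℝ) / (ℓ+1)) =
      ((d : ℝ) * b + (d * ((d:ℝ)-1)/2) * g) / ((g:ℝ)*d) := by
    rw [← Finset.sum_div]
    rw [hgl]
    congr 1
    push_cast
    rw [Finset.sum_add_distrib, Finset.sum_const, Finset.card_range, ← Finset.sum_mul,
      sum_range_cast d hd]
    push_cast
    ring
  rw [hs1, hs2]
  have hle : ↑i / g + (if b ≤ ↑i % g then 1 else 0) ≤ d := by split_ifs <;> omega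
  have hcast : ((d - (↑i / g + (if b ≤ ↑i % g then 1 else 0)) : ℕ) : ℝ) =
      (d : ℝ) - (↑i / g : ℕ) - (if b ≤ ↑i % g then 1 else 0) := by
    rw [Nat.cast_sub hle, Nat.cast_add, apply_ite (Nat.cast (R := ℝ))]
    push_cast
    ring
  rw [hcast]
  have hg0 : (g : ℝ) ≠ 0 := Nat.cast_ne_zero.2 hg.ne'
  have hd0 : (d : ℝ) ≠ 0 := Nat.cast_ne_zero.2 hd.ne'
  field_simp
  ring_nf
  field_simp
  ring

lemma fgb_sub {ℓ g d : ℕ} (hg : 0 < g) (hd : 0 < d) (hgd : g * d = ℓ + 1)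
    {b : ℕ} (hb : b < g) (i j : Fin (ℓ + 1)) :
    fgb ℓ g d b i - fgb ℓ g d b j =
      ((((j : ℕ) / g : ℕ) : ℝ) - (((i : ℕ) / g : ℕ) : ℝ)
        + (if b ≤ (j : ℕ) % g then (1 : ℝ) else 0)
        - (if b ≤ (i : ℕ) % g then (1 : ℝ) else 0)) / d := by
  rw [fgb_apply hg hd hgd hb i, fgb_apply hg hd hgd hb j, div_sub_div_same]
  congr 1
  ring

lemma comb_sub {ℓ g d : ℕ} (hg : 0 < g) (hd : 0 < d) (hgd : g * d = ℓ + 1)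
    (μ : Fin g → ℝ) (i j : Fin (ℓ + 1)) :
    (∑ b, μ b • fgb ℓ g d ↑b) i - (∑ b, μ b • fgb ℓ g d ↑b) j =
      ((∑ b, μ b) * ((((j : ℕ) / g : ℕ) : ℝ) - (((i : ℕ) / g : ℕ) : ℝ))
        + ∑ b ∈ univ.filter (fun b : Fin g => (b : ℕ) ≤ (j : ℕ) % g), μ b
        - ∑ b ∈ univ.filter (fun b : Fin g => (b : ℕ) ≤ (i : ℕ) % g), μ b) / d := by
  have hd0 : (d : ℝ) ≠ 0 := Nat.cast_ne_zero.2 hd.ne'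
  simp only [Finset.sum_apply, Pi.smul_apply, smul_eq_mul]
  rw [← Finset.sum_sub_distrib]
  have key : ∀ b : Fin g, μ b * fgb ℓ g d ↑b i - μ b * fgb ℓ g d ↑b j
      = μ b * (((((j : ℕ) / g : ℕ) : ℝ) - (((i : ℕ) / g : ℕ) : ℝ)
        + (if (b : ℕ) ≤ (j : ℕ) % g then (1 : ℝ) else 0)
        - (if (b : ℕ) ≤ (i : ℕ) % g then (1 : ℝ) else 0)) / d) := fun b => by
    rw [← mul_sub, fgb_sub hg hd hgd b.isLt]
  rw [Finset.sum_congr rfl (fun b _ => key b), eq_div_iff hd0, Finset.sum_mul,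
    Finset.sum_mul, Finset.sum_filter, Finset.sum_filter, ← Finset.sum_add_distrib,
    ← Finset.sum_sub_distrib]
  refine Finset.sum_congr rfl (fun b _ => ?_)
  field_simp
  split_ifs <;> ring

lemma recover {ℓ g d : ℕ} (hg : 0 < g) (hd : 0 < d) (hgd : g * d = ℓ + 1)
    (μ : Fin g → ℝ) {b : ℕ} (hb1 : 1 ≤ b) (hbg : b < g)
    (h1 : b - 1 < ℓ + 1) (h2 : b < ℓ + 1) :
    (∑ b', μ b' • fgb ℓ g d ↑b') ⟨b - 1, h1⟩ - (∑ b', μ b' • fgb ℓ g d ↑b') ⟨b, h2⟩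
      = μ ⟨b, hbg⟩ / d := by
  rw [comb_sub hg hd hgd μ]
  have e1 : (b - 1) / g = 0 := Nat.div_eq_of_lt (by omega)
  have e2 : b / g = 0 := Nat.div_eq_of_lt hbg
  have e3 : (b - 1) % g = b - 1 := Nat.mod_eq_of_lt (by omega)
  have e4 : b % g = b := Nat.mod_eq_of_lt hbg
  simp only [e1, e2, e3, e4]
  have hins : univ.filter (fun b' : Fin g => (b' : ℕ) ≤ b) =
      insert ⟨b, hbg⟩ (univ.filter (fun b' : Fin g => (b' : ℕ) ≤ b - 1)) := by
    ext b'
    simp only [mem_filter, mem_univ, true_and, mem_insert, Fin.ext_iff]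
    omega
  rw [hins, Finset.sum_insert (by simp; omega)]
  push_cast
  ring

lemma sum_div_d {ℓ g d : ℕ} (hg : 0 < g) (hd : 0 < d) (hgd : g * d = ℓ + 1)
    (μ : Fin g → ℝ) (h0 : 0 < ℓ + 1) (hgl : g < ℓ + 1) :
    (∑ b, μ b • fgb ℓ g d ↑b) ⟨0, h0⟩ - (∑ b, μ b • fgb ℓ g d ↑b) ⟨g, hgl⟩
      = (∑ b, μ b) / d := by
  rw [comb_sub hg hd hgd μ]
  have e1 : (0 : ℕ) / g = 0 := Nat.zero_div g
  have e2 : g / g = 1 := Nat.div_self hg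
  have e3 : (0 : ℕ) % g = 0 := Nat.zero_mod g
  have e4 : g % g = 0 := Nat.mod_self g
  simp only [e1, e2, e3, e4]
  push_cast
  ring

lemma varpi_sum (ℓ j : ℕ) (hj : j < ℓ + 1) : ∑ i, varpi ℓ j i = 0 := by
  simp only [varpi, Finset.sum_sub_distrib, Finset.sum_const, card_univ, Fintype.card_fin,
    nsmul_eq_mul]
  have h1 : (∑ i : Fin (ℓ + 1), if (i : ℕ) < j then (1 : ℝ) else 0) = j := by
    rw [Fin.sum_univ_eq_sum_range (fun x => if x < j then (1 : ℝ) else 0), Finset.sum_boole]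
    have : (Finset.range (ℓ + 1)).filter (· < j) = Finset.range j := by
      ext x; simp only [mem_filter, mem_range]; omega
    rw [this, card_range]
  rw [h1]
  have h2 : ((ℓ : ℝ) + 1) ≠ 0 := by positivity
  field_simp
  push_cast
  ring

lemma fgb_sum_coords {ℓ g d : ℕ} (b : ℕ) : ∑ i, fgb ℓ g d b i = 0 := by
  simp only [fgb, Pi.smul_apply, Finset.sum_apply, smul_eq_mul]
  rw [← Finset.mul_sum, Finset.sum_comm]
  rw [Finset.sum_congr rfl (fun j hj => varpi_sum ℓ j (mem_range.1 (mem_filter.1 hj).1))]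
  simp

lemma vertexSet_eq (ℓ g d : ℕ) :
    {v : Fin (ℓ + 1) → ℝ | ∃ b < g, v = fgb ℓ g d b} =
      Set.range (fun b : Fin g => fgb ℓ g d ↑b) := by
  ext v
  constructor
  · rintro ⟨b, hb, rfl⟩; exact ⟨⟨b, hb⟩, rfl⟩
  · rintro ⟨⟨b, hb⟩, rfl⟩; exact ⟨b, hb, rfl⟩

lemma mem_conv_iff {ℓ g d : ℕ} {x : Fin (ℓ + 1) → ℝ} :
    x ∈ convexHull ℝ {v : Fin (ℓ + 1) → ℝ | ∃ b < g, v = fgb ℓ g d b} ↔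
      ∃ w : Fin g → ℝ, (∀ b, 0 ≤ w b) ∧ ∑ b, w b = 1 ∧ ∑ b, w b • fgb ℓ g d ↑b = x := by
  rw [vertexSet_eq, convexHull_range_eq_exists_affineCombination]
  constructor
  · rintro ⟨s, w, hw0, hw1, rfl⟩
    refine ⟨fun b => if b ∈ s then w b else 0, fun b => ?_, ?_, ?_⟩
    · by_cases h : b ∈ s
      · simpa [h] using hw0 b h
      · simp [h]
    · rw [Finset.sum_ite_mem, univ_inter, hw1]
    · rw [affineCombination_eq_linear_combination s _ w hw1]
      rw [show (∑ i ∈ s, w i • fgb ℓ g d ↑i) =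
          ∑ i ∈ univ ∩ s, w i • fgb ℓ g d ↑i by rw [univ_inter],
        ← Finset.sum_ite_mem univ s (fun b => w b • fgb ℓ g d ↑b)]
      refine Finset.sum_congr rfl (fun b _ => ?_)
      rw [ite_smul, zero_smul]
  · rintro ⟨w, hw0, hw1, rfl⟩
    exact ⟨univ, w, fun b _ => hw0 b, hw1,
      affineCombination_eq_linear_combination univ _ w hw1⟩

lemma hgle_of {ℓ g d : ℕ} (hd : 0 < d) (hgd : g * d = ℓ + 1) : g ≤ ℓ + 1 := by
  calc g = g * 1 := (Nat.mul_one g).symm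
    _ ≤ g * d := Nat.mul_le_mul_left g hd
    _ = ℓ + 1 := hgd

noncomputable def Gfun (ℓ g d : ℕ) (hgle : g ≤ ℓ + 1) (b : Fin g) (y : Fin (ℓ + 1) → ℝ) : ℝ :=
  (d : ℝ) * (y ⟨(b : ℕ) - 1, lt_of_lt_of_le (lt_of_le_of_lt (Nat.sub_le _ _) b.isLt) hgle⟩
    - y ⟨(b : ℕ), lt_of_lt_of_le b.isLt hgle⟩)

lemma Gfun_cont {ℓ g d : ℕ} (hgle : g ≤ ℓ + 1) (b : Fin g) : Continuous (Gfun ℓ g d hgle b) :=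
  continuous_const.mul ((continuous_apply _).sub (continuous_apply _))

lemma Gfun_comb {ℓ g d : ℕ} (hg : 0 < g) (hd : 0 < d) (hgd : g * d = ℓ + 1)
    (hgle : g ≤ ℓ + 1) (μ : Fin g → ℝ) (b : Fin g) (hb : 1 ≤ (b : ℕ)) :
    Gfun ℓ g d hgle b (∑ b', μ b' • fgb ℓ g d ↑b') = μ b := by
  have hd0 : (d : ℝ) ≠ 0 := Nat.cast_ne_zero.2 hd.ne'
  have h := recover hg hd hgd μ hb b.isLt
    (lt_of_lt_of_le (lt_of_le_of_lt (Nat.sub_le _ _) b.isLt) hgle)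
    (lt_of_lt_of_le b.isLt hgle)
  rw [Gfun, h, Fin.eta]
  field_simp

/-- splitting the sum over `Fin g` at the zero index -/
lemma sum_split {g : ℕ} (hg : 0 < g) (w : Fin g → ℝ) :
    ∑ b, w b = w ⟨0, hg⟩ + ∑ b ∈ univ.filter (fun b : Fin g => 1 ≤ (b : ℕ)), w b := by
  have hT : univ.filter (fun b : Fin g => 1 ≤ (b : ℕ)) = univ.erase ⟨0, hg⟩ := by
    ext b
    simp only [mem_filter, mem_univ, true_and, mem_erase, ne_eq, Fin.ext_iff, and_true]
    omega
  rw [hT, Finset.add_sum_erase _ w (mem_univ _)]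

lemma indep {ℓ g d : ℕ} (hg : 0 < g) (hd : 0 < d) (hgd : g * d = ℓ + 1)
    (w : Fin g → ℝ) (hs : ∑ b, w b = 0) (hc : ∑ b, w b • fgb ℓ g d ↑b = 0) :
    w = 0 := by
  have hgle : g ≤ ℓ + 1 := hgle_of hd hgd
  have hd0 : (d : ℝ) ≠ 0 := Nat.cast_ne_zero.2 hd.ne'
  have hpos : ∀ b : Fin g, 1 ≤ (b : ℕ) → w b = 0 := by
    intro b hb
    have h := Gfun_comb hg hd hgd hgle w b hb
    rw [hc] at h
    simp only [Gfun, Pi.zero_apply, sub_self, mul_zero] at h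
    exact h.symm
  funext b
  rcases Nat.eq_zero_or_pos (b : ℕ) with h0 | h0
  · have hb0 : b = ⟨0, hg⟩ := Fin.ext h0
    have := sum_split hg w
    rw [hs, Finset.sum_eq_zero (fun b' hb' => hpos b' (mem_filter.1 hb').2)] at this
    simpa [hb0] using this.symm
  · exact hpos b h0

lemma uniq {ℓ g d : ℕ} (hg : 0 < g) (hd : 0 < d) (hgd : g * d = ℓ + 1)
    (w u : Fin g → ℝ) (hw : ∑ b, w b = 1) (hu : ∑ b, u b = 1)
    (h : ∑ b, w b • fgb ℓ g d ↑b = ∑ b, u b • fgb ℓ g d ↑b) : w = u := by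
  have := indep hg hd hgd (w - u) (by simp [Finset.sum_sub_distrib, hw, hu])
    (by simp only [Pi.sub_apply, sub_smul, Finset.sum_sub_distrib, h, sub_self])
  funext b
  have := congrFun this b
  simp only [Pi.sub_apply, Pi.zero_apply] at this
  linarith

set_option maxHeartbeats 1000000 in
theorem mem_intrinsic_iff {ℓ g d : ℕ} (hg : 0 < g) (hd : 0 < d) (hgd : g * d = ℓ + 1)
    {x : Fin (ℓ + 1) → ℝ} :
    x ∈ intrinsicInterior ℝ (convexHull ℝ {v : Fin (ℓ + 1) → ℝ | ∃ b < g, v = fgb ℓ g d b}) ↔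
      ∃ w : Fin g → ℝ, (∀ b, 0 < w b) ∧ ∑ b, w b = 1 ∧ ∑ b, w b • fgb ℓ g d ↑b = x := by
  have hgle : g ≤ ℓ + 1 := hgle_of hd hgd
  have hd0 : (d : ℝ) ≠ 0 := Nat.cast_ne_zero.2 hd.ne'
  set S := {v : Fin (ℓ + 1) → ℝ | ∃ b < g, v = fgb ℓ g d b} with hS
  set C := convexHull ℝ S with hC
  have hspan : ∀ y, y ∈ C → y ∈ affineSpan ℝ C := fun y hy => subset_affineSpan ℝ C hy
  have hspan_comb : ∀ y : Fin (ℓ + 1) → ℝ, y ∈ affineSpan ℝ C →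
      ∃ w : Fin g → ℝ, ∑ b, w b = 1 ∧ ∑ b, w b • fgb ℓ g d ↑b = y := by
    intro y hy
    rw [hC, affineSpan_convexHull, hS, vertexSet_eq] at hy
    obtain ⟨w, hw1, hwy⟩ := eq_affineCombination_of_mem_affineSpan_of_fintype hy
    exact ⟨w, hw1, by
      rw [hwy, affineCombination_eq_linear_combination univ _ w hw1]⟩
  constructor
  · -- interior point has strictly positive coordinates
    intro hx
    have hxC : x ∈ C := intrinsicInterior_subset hx
    obtain ⟨w, hw0, hw1, hwx⟩ := mem_conv_iff.1 hxC
    refine ⟨w, ?_, hw1, hwx⟩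
    by_contra hcon
    push_neg at hcon
    obtain ⟨b0, hb0⟩ := hcon
    have hwb0 : w b0 = 0 := le_antisymm hb0 (hw0 b0)
    -- the vertex
    have hyC : fgb ℓ g d ↑b0 ∈ C := subset_convexHull ℝ S ⟨↑b0, b0.isLt, rfl⟩
    obtain ⟨x', hx'int, hx'coe⟩ := mem_intrinsicInterior.1 hx
    have hxA : x ∈ affineSpan ℝ C := hspan x hxC
    have hyA : fgb ℓ g d ↑b0 ∈ affineSpan ℝ C := hspan _ hyC
    set y := fgb ℓ g d ↑b0 with hy
    have hmemA : ∀ t : ℝ, t • (x - y) + x ∈ affineSpan ℝ C := by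
      intro t
      exact AffineSubspace.smul_vsub_vadd_mem _ t hxA hyA hxA
    set Γ : ℝ → affineSpan ℝ C := fun t => ⟨t • (x - y) + x, hmemA t⟩ with hΓ
    have hΓcont : Continuous Γ :=
      Continuous.subtype_mk ((continuous_id.smul continuous_const).add continuous_const) _
    have hΓ0 : Γ 0 = x' := Subtype.ext (by simp [hΓ, hx'coe])
    have hopen : IsOpen (Γ ⁻¹' interior ((↑) ⁻¹' C : Set (affineSpan ℝ C))) :=
      isOpen_interior.preimage hΓcont
    have h0mem : (0 : ℝ) ∈ Γ ⁻¹' interior ((↑) ⁻¹' C) := by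
      simp only [Set.mem_preimage, hΓ0]
      exact hx'int
    obtain ⟨ε, hε, hball⟩ := Metric.isOpen_iff.1 hopen 0 h0mem
    have htmem : (ε / 2 : ℝ) ∈ Γ ⁻¹' interior ((↑) ⁻¹' C) := by
      apply hball
      rw [Metric.mem_ball, Real.dist_eq]
      rw [abs_of_pos (by linarith)]
      linarith
    set t := (ε / 2 : ℝ) with ht
    have htpos : 0 < t := by positivity
    have hγC : t • (x - y) + x ∈ C := by
      have h1 : Γ t ∈ ((↑) ⁻¹' C : Set (affineSpan ℝ C)) := interior_subset htmem
      exact h1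
    obtain ⟨u, hu0, hu1, huy⟩ := mem_conv_iff.1 hγC
    set w' : Fin g → ℝ := fun b => (1 + t) * w b - if b = b0 then t else 0 with hw'
    have hw'1 : ∑ b, w' b = 1 := by
      simp only [hw', Finset.sum_sub_distrib, ← Finset.mul_sum, hw1,
        Finset.sum_ite_eq' univ b0 (fun _ => t), mem_univ, if_true]
      ring
    have hw'c : ∑ b, w' b • fgb ℓ g d ↑b = t • (x - y) + x := by
      simp only [hw', sub_smul, mul_smul, ite_smul, zero_smul, Finset.sum_sub_distrib,
        ← Finset.smul_sum, hwx, Finset.sum_ite_eq' univ b0 (fun b => t • fgb ℓ g d ↑b),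
        mem_univ, if_true]
      rw [← hy]
      module
    have hueq : u = w' := uniq hg hd hgd u w' hu1 hw'1 (by rw [huy, hw'c])
    have h1 : u b0 = -t := by
      rw [hueq]
      simp [hw', hwb0]
    have h2 := hu0 b0
    rw [h1] at h2
    linarith
  · -- positive coordinates implies interior
    rintro ⟨w, hw0, hw1, hwx⟩
    have hxC : x ∈ C := mem_conv_iff.2 ⟨w, fun b => (hw0 b).le, hw1, hwx⟩
    rw [mem_intrinsicInterior]
    refine ⟨⟨x, hspan x hxC⟩, ?_, rfl⟩
    set T := univ.filter (fun b : Fin g => 1 ≤ (b : ℕ)) with hT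
    set U : Set (Fin (ℓ + 1) → ℝ) :=
      {y | 0 < 1 - ∑ b ∈ T, Gfun ℓ g d hgle b y} ∩ ⋂ b ∈ T, {y | 0 < Gfun ℓ g d hgle b y}
      with hU
    have hUopen : IsOpen U := by
      apply IsOpen.inter
      · exact isOpen_lt continuous_const
          (continuous_const.sub (by
            exact continuous_finset_sum T (fun b _ => Gfun_cont hgle b)))
      · exact isOpen_biInter_finset (fun b _ => isOpen_lt continuous_const (Gfun_cont hgle b))
    rw [mem_interior]
    refine ⟨(↑) ⁻¹' U, ?_, hUopen.preimage continuous_subtype_val, ?_⟩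
    · -- U ∩ span ⊆ C
      rintro ⟨y, hyA⟩ hyU
      simp only [Set.mem_preimage, hU, Set.mem_inter_iff, Set.mem_setOf_eq, Set.mem_iInter]
        at hyU
      obtain ⟨hy0, hyb⟩ := hyU
      obtain ⟨u, hu1, huy⟩ := hspan_comb y hyA
      have hub : ∀ b ∈ T, u b = Gfun ℓ g d hgle b y := by
        intro b hb
        rw [← huy, Gfun_comb hg hd hgd hgle u b (mem_filter.1 hb).2]
      have hub0 : u ⟨0, hg⟩ = 1 - ∑ b ∈ T, Gfun ℓ g d hgle b y := by
        have := sum_split hg u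
        rw [hu1, Finset.sum_congr rfl hub] at this
        linarith
      show y ∈ C
      refine mem_conv_iff.2 ⟨u, ?_, hu1, huy⟩
      intro b
      rcases Nat.eq_zero_or_pos (b : ℕ) with h0 | h0
      · have hb0 : b = ⟨0, hg⟩ := Fin.ext h0
        rw [hb0, hub0]
        linarith
      · rw [hub b (mem_filter.2 ⟨mem_univ _, h0⟩)]
        exact (hyb b (mem_filter.2 ⟨mem_univ _, h0⟩)).le
    · -- membership of x in U
      simp only [Set.mem_preimage, hU, Set.mem_inter_iff, Set.mem_setOf_eq, Set.mem_iInter]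
      constructor
      · have hGb : ∀ b ∈ T, Gfun ℓ g d hgle b x = w b := by
          intro b hb
          rw [← hwx, Gfun_comb hg hd hgd hgle w b (mem_filter.1 hb).2]
        rw [Finset.sum_congr rfl hGb]
        have := sum_split hg w
        rw [hw1] at this
        have := hw0 ⟨0, hg⟩
        linarith
      · intro b hb
        rw [← hwx, Gfun_comb hg hd hgd hgle w b (mem_filter.1 hb).2]
        exact hw0 b

-- ### membership in q • C
lemma memq_iff {ℓ g d : ℕ} {q : ℕ} (hq : 0 < q) {x : Fin (ℓ + 1) → ℝ} :
    x ∈ (q : ℝ) • convexHull ℝ {v : Fin (ℓ + 1) → ℝ | ∃ b < g, v = fgb ℓ g d b} ↔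
      ∃ μ : Fin g → ℝ, (∀ b, 0 ≤ μ b) ∧ ∑ b, μ b = q ∧ ∑ b, μ b • fgb ℓ g d ↑b = x := by
  have hq0 : (q : ℝ) ≠ 0 := by positivity
  constructor
  · rintro ⟨y, hy, rfl⟩
    obtain ⟨w, h0, h1, h2⟩ := mem_conv_iff.1 hy
    refine ⟨fun b => q * w b, fun b => mul_nonneg (by positivity) (h0 b),
      by rw [← Finset.mul_sum, h1, mul_one], ?_⟩
    dsimp only
    rw [← h2, Finset.smul_sum]
    exact Finset.sum_congr rfl fun b _ => by rw [smul_smul]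
  · rintro ⟨μ, h0, h1, rfl⟩
    refine ⟨∑ b, (μ b / q) • fgb ℓ g d ↑b, mem_conv_iff.2 ⟨fun b => μ b / q,
      fun b => div_nonneg (h0 b) (by positivity), by rw [← Finset.sum_div, h1, div_self hq0],
      rfl⟩, ?_⟩
    dsimp only
    rw [Finset.smul_sum]
    refine Finset.sum_congr rfl fun b _ => ?_
    rw [smul_smul]
    congr 1
    field_simp

lemma memq_int_iff {ℓ g d : ℕ} (hg : 0 < g) (hd : 0 < d) (hgd : g * d = ℓ + 1)
    {q : ℕ} (hq : 0 < q) {x : Fin (ℓ + 1) → ℝ} :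
    x ∈ (q : ℝ) • intrinsicInterior ℝ
        (convexHull ℝ {v : Fin (ℓ + 1) → ℝ | ∃ b < g, v = fgb ℓ g d b}) ↔
      ∃ μ : Fin g → ℝ, (∀ b, 0 < μ b) ∧ ∑ b, μ b = q ∧ ∑ b, μ b • fgb ℓ g d ↑b = x := by
  have hq0 : (q : ℝ) ≠ 0 := by positivity
  constructor
  · rintro ⟨y, hy, rfl⟩
    obtain ⟨w, h0, h1, h2⟩ := (mem_intrinsic_iff hg hd hgd).1 hy
    refine ⟨fun b => q * w b, fun b => mul_pos (by positivity) (h0 b),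
      by rw [← Finset.mul_sum, h1, mul_one], ?_⟩
    dsimp only
    rw [← h2, Finset.smul_sum]
    exact Finset.sum_congr rfl fun b _ => by rw [smul_smul]
  · rintro ⟨μ, h0, h1, rfl⟩
    refine ⟨∑ b, (μ b / q) • fgb ℓ g d ↑b, (mem_intrinsic_iff hg hd hgd).2 ⟨fun b => μ b / q,
      fun b => div_pos (h0 b) (by positivity), by rw [← Finset.sum_div, h1, div_self hq0],
      rfl⟩, ?_⟩
    dsimp only
    rw [Finset.smul_sum]
    refine Finset.sum_congr rfl fun b _ => ?_
    rw [smul_smul]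
    congr 1
    field_simp

-- ### lattice membership of integral combinations
lemma comb_mem_ZA {ℓ g d : ℕ} (hg : 0 < g) (hd : 0 < d) (hgd : g * d = ℓ + 1)
    (c : Fin g → ℕ) :
    (∑ b, ((d * c b : ℕ) : ℝ) • fgb ℓ g d ↑b) ∈ ZA ℓ := by
  have hd0 : (d : ℝ) ≠ 0 := Nat.cast_ne_zero.2 hd.ne'
  constructor
  · simp only [Finset.sum_apply, Pi.smul_apply, smul_eq_mul]
    rw [Finset.sum_comm]
    apply Finset.sum_eq_zero
    intro b _
    rw [← Finset.mul_sum, fgb_sum_coords, mul_zero]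
  · intro i j
    refine ⟨(∑ b, (c b : ℤ)) * ((Nat.cast ((j : ℕ) / g) : ℤ) - (Nat.cast ((i : ℕ) / g) : ℤ))
      + ∑ b ∈ univ.filter (fun b : Fin g => (b : ℕ) ≤ (j : ℕ) % g), (c b : ℤ)
      - ∑ b ∈ univ.filter (fun b : Fin g => (b : ℕ) ≤ (i : ℕ) % g), (c b : ℤ), ?_⟩
    rw [comb_sub hg hd hgd, div_eq_iff hd0]
    push_cast
    rw [show ((((j:ℕ):ℤ) / (g:ℤ) : ℤ) : ℝ) = (((j:ℕ) / g : ℕ) : ℝ) from by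
        rw [← Int.natCast_div]; norm_cast,
      show ((((i:ℕ):ℤ) / (g:ℤ) : ℤ) : ℝ) = (((i:ℕ) / g : ℕ) : ℝ) from by
        rw [← Int.natCast_div]; norm_cast]
    rw [← Finset.mul_sum, ← Finset.mul_sum, ← Finset.mul_sum]
    ring

-- ### extraction of integral coefficients
lemma exists_c {ℓ g d : ℕ} (hg : 0 < g) (hd : 0 < d) (hgd : g * d = ℓ + 1)
    (q m : ℕ) (hm : (q : ℝ) = (d : ℝ) * m) (μ : Fin g → ℝ)
    (hμ0 : ∀ b, 0 ≤ μ b) (hμs : ∑ b, μ b = q)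
    (hZ : (∑ b, μ b • fgb ℓ g d ↑b) ∈ ZA ℓ) :
    ∃ c : Fin g → ℕ, (∑ b, c b = m) ∧ ∀ b, μ b = (d : ℝ) * c b := by
  have hgle : g ≤ ℓ + 1 := hgle_of hd hgd
  have hd0 : (d : ℝ) ≠ 0 := Nat.cast_ne_zero.2 hd.ne'
  have hdpos : (0 : ℝ) < d := by positivity
  obtain ⟨hsum0, hdiff⟩ := hZ
  have hex : ∀ b : Fin g, ∃ k : ℕ, 1 ≤ (b : ℕ) → μ b = (d : ℝ) * k := by
    intro b
    by_cases hb : 1 ≤ (b : ℕ)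
    · have h1 : (b : ℕ) - 1 < ℓ + 1 :=
        lt_of_lt_of_le (lt_of_le_of_lt (Nat.sub_le _ _) b.isLt) hgle
      have h2 : (b : ℕ) < ℓ + 1 := lt_of_lt_of_le b.isLt hgle
      have hr := recover hg hd hgd μ hb b.isLt h1 h2
      obtain ⟨z, hz⟩ := hdiff ⟨(b : ℕ) - 1, h1⟩ ⟨(b : ℕ), h2⟩
      rw [hr, Fin.eta] at hz
      have hz0 : (0 : ℤ) ≤ z := by
        have h3 : (0 : ℝ) ≤ (z : ℝ) := by
          rw [← hz]
          exact div_nonneg (hμ0 b) hdpos.le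
        exact_mod_cast h3
      refine ⟨z.toNat, fun _ => ?_⟩
      have h4 : ((z.toNat : ℕ) : ℝ) = (z : ℝ) := by
        rw [← Int.toNat_of_nonneg hz0]
        push_cast
        rw [Int.toNat_of_nonneg hz0]
      rw [h4, ← hz]
      field_simp
    · exact ⟨0, fun h => absurd h hb⟩
  choose n hn using hex
  set b0 : Fin g := ⟨0, hg⟩ with hb0def
  set T := univ.filter (fun b : Fin g => 1 ≤ (b : ℕ)) with hTdef
  have hTsum : ∑ b ∈ T, μ b = (d : ℝ) * (∑ b ∈ T, (n b : ℝ)) := by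
    rw [Finset.mul_sum]
    exact Finset.sum_congr rfl fun b hb => hn b (mem_filter.1 hb).2
  have hsplitμ := sum_split hg μ
  rw [hμs] at hsplitμ
  have hz0 : μ b0 = (d : ℝ) * ((m : ℝ) - ∑ b ∈ T, (n b : ℝ)) := by
    rw [mul_sub, ← hTsum]
    have : (q : ℝ) = (d : ℝ) * m := hm
    linarith
  have hz0i : (0 : ℤ) ≤ (m : ℤ) - ∑ b ∈ T, (n b : ℤ) := by
    have h6 : (0 : ℝ) ≤ (m : ℝ) - ∑ b ∈ T, (n b : ℝ) := by
      nlinarith [hμ0 b0, hz0]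
    have h7 : ((((m : ℤ) - ∑ b ∈ T, (n b : ℤ)) : ℤ) : ℝ) = (m : ℝ) - ∑ b ∈ T, (n b : ℝ) := by
      push_cast
      ring
    rw [show (0:ℤ) = ((0:ℤ)) from rfl]
    have := h7 ▸ h6
    exact_mod_cast this
  have hk0 : μ b0 = (d : ℝ) * (((m : ℤ) - ∑ b ∈ T, (n b : ℤ)).toNat : ℝ) := by
    rw [hz0]
    congr 1
    have h8 : ((((m : ℤ) - ∑ b ∈ T, (n b : ℤ)).toNat : ℕ) : ℤ) = (m : ℤ) - ∑ b ∈ T, (n b : ℤ) :=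
      Int.toNat_of_nonneg hz0i
    have h9 : ((((m : ℤ) - ∑ b ∈ T, (n b : ℤ)).toNat : ℕ) : ℝ) =
        ((((m : ℤ) - ∑ b ∈ T, (n b : ℤ)) : ℤ) : ℝ) := by
      exact_mod_cast congrArg (Int.cast : ℤ → ℝ) h8
    rw [h9]
    push_cast
    ring
  set c : Fin g → ℕ := fun b =>
    if 1 ≤ (b : ℕ) then n b else ((m : ℤ) - ∑ b ∈ T, (n b : ℤ)).toNat with hcdef
  have hall : ∀ b, μ b = (d : ℝ) * c b := by
    intro b
    by_cases hb : 1 ≤ (b : ℕ)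
    · simp only [hcdef, if_pos hb]
      exact hn b hb
    · have hbb : b = b0 := Fin.ext (show (b : ℕ) = 0 by omega)
      simp only [hcdef, if_neg hb]
      rw [hbb]
      exact hk0
  have hsum : ∑ b, (c b : ℝ) = m := by
    have h7 : (d : ℝ) * (∑ b, (c b : ℝ)) = (d : ℝ) * m := by
      rw [Finset.mul_sum]
      calc ∑ b, (d : ℝ) * c b = ∑ b, μ b := Finset.sum_congr rfl fun b _ => (hall b).symm
        _ = q := hμs
        _ = (d : ℝ) * m := hm
    exact mul_left_cancel₀ hd0 h7
  refine ⟨c, ?_, hall⟩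
  exact_mod_cast hsum

-- ### counting lemma
lemma card_sum_eq (g k : ℕ) (hg : 0 < g) :
    Nat.card {c : Fin g → ℕ // ∑ b, c b = k} = (g - 1 + k).choose (g - 1) := by
  rw [Nat.card_congr (Sym.equivNatSumOfFintype (Fin g) k).symm, Nat.card_eq_fintype_card,
    Sym.card_sym_eq_multichoose, Fintype.card_fin, Nat.multichoose_eq]
  have h1 : g + k - 1 = g - 1 + k := by omega
  rw [h1]
  have h2 := Nat.choose_symm (Nat.le_add_left k (g - 1))
  rw [show g - 1 + k - k = g - 1 from by omega] at h2
  exact h2.symm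

-- ### emptiness when d does not divide q
lemma not_dvd_empty {ℓ g d : ℕ} (hg : 0 < g) (hd : 0 < d) (hgd : g * d = ℓ + 1)
    (q : ℕ) (hq : 0 < q) (hnd : ¬ d ∣ q) (x : Fin (ℓ + 1) → ℝ)
    (hP : x ∈ (q : ℝ) • convexHull ℝ {v : Fin (ℓ + 1) → ℝ | ∃ b < g, v = fgb ℓ g d b})
    (hZ : x ∈ ZA ℓ) : False := by
  have hd1 : d ≠ 1 := fun h => hnd (h ▸ one_dvd q)
  have hd2 : 2 ≤ d := by omega
  have h2 : g * 2 ≤ g * d := Nat.mul_le_mul_left g hd2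
  have hgl : g < ℓ + 1 := by omega
  obtain ⟨μ, h0, h1, hx⟩ := (memq_iff hq).1 hP
  obtain ⟨z, hz⟩ := hZ.2 ⟨0, Nat.succ_pos ℓ⟩ ⟨g, hgl⟩
  rw [← hx, sum_div_d hg hd hgd μ (Nat.succ_pos ℓ) hgl, h1] at hz
  have hz0 : (0 : ℤ) ≤ z := by
    have h3 : (0 : ℝ) ≤ (z : ℝ) := by rw [← hz]; positivity
    exact_mod_cast h3
  have hq' : (q : ℝ) = (d : ℝ) * (z.toNat : ℝ) := by
    have h4 : ((z.toNat : ℕ) : ℝ) = (z : ℝ) := by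
      rw [← Int.toNat_of_nonneg hz0]; push_cast; rw [Int.toNat_of_nonneg hz0]
    rw [h4, ← hz]
    field_simp
  have : q = d * z.toNat := by exact_mod_cast hq'
  exact hnd ⟨z.toNat, this⟩

-- ### bijections
lemma card_closure {ℓ g d : ℕ} (hg : 0 < g) (hd : 0 < d) (hgd : g * d = ℓ + 1)
    (q m : ℕ) (hq : 0 < q) (hqm : q = d * m) :
    Nat.card {x : Fin (ℓ + 1) → ℝ //
        x ∈ (q : ℝ) • convexHull ℝ {v : Fin (ℓ + 1) → ℝ | ∃ b < g, v = fgb ℓ g d b} ∧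
        x ∈ ZA ℓ} = (g - 1 + m).choose (g - 1) := by
  have hd0 : (d : ℝ) ≠ 0 := Nat.cast_ne_zero.2 hd.ne'
  have hmq : (q : ℝ) = (d : ℝ) * m := by exact_mod_cast hqm
  rw [← card_sum_eq g m hg]
  refine Nat.card_congr (Equiv.symm (Equiv.ofBijective
    (fun c => ⟨∑ b, ((d * c.1 b : ℕ) : ℝ) • fgb ℓ g d ↑b, ?_, ?_⟩) ⟨?_, ?_⟩))
  · refine (memq_iff hq).2 ⟨fun b => ((d * c.1 b : ℕ) : ℝ),
      fun b => Nat.cast_nonneg _, ?_, rfl⟩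
    push_cast
    rw [← Finset.mul_sum]
    have : (∑ b, (c.1 b : ℝ)) = (m : ℝ) := by exact_mod_cast congrArg Nat.cast c.2
    rw [this, ← hmq]
  · exact comb_mem_ZA hg hd hgd c.1
  · rintro ⟨c1, hc1⟩ ⟨c2, hc2⟩ h
    have h' : (∑ b, ((d * c1 b : ℕ) : ℝ) • fgb ℓ g d ↑b)
        = ∑ b, ((d * c2 b : ℕ) : ℝ) • fgb ℓ g d ↑b := congrArg Subtype.val h
    have hw := indep hg hd hgd (fun b => ((d * c1 b : ℕ) : ℝ) - ((d * c2 b : ℕ) : ℝ))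
      (by
        rw [Finset.sum_sub_distrib]
        push_cast
        rw [← Finset.mul_sum, ← Finset.mul_sum]
        have e1 : (∑ b, (c1 b : ℝ)) = (m : ℝ) := by exact_mod_cast congrArg Nat.cast hc1
        have e2 : (∑ b, (c2 b : ℝ)) = (m : ℝ) := by exact_mod_cast congrArg Nat.cast hc2
        rw [e1, e2]
        ring)
      (by
        simp only [sub_smul, Finset.sum_sub_distrib, h']
        exact sub_self _)
    refine Subtype.ext (funext fun b => ?_)
    have := congrFun hw b
    simp only [Pi.zero_apply] at this
    have h5 : ((d * c1 b : ℕ) : ℝ) = ((d * c2 b : ℕ) : ℝ) := by linarith [sub_eq_zero.1 this]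
    have h6 : d * c1 b = d * c2 b := by exact_mod_cast h5
    exact Nat.eq_of_mul_eq_mul_left hd h6
  · rintro ⟨x, hP, hZ⟩
    obtain ⟨μ, h0, h1, hx⟩ := (memq_iff hq).1 hP
    obtain ⟨c, hcm, hall⟩ := exists_c hg hd hgd q m hmq μ h0 h1 (by rw [hx]; exact hZ)
    refine ⟨⟨c, hcm⟩, Subtype.ext ?_⟩
    show (∑ b, ((d * c b : ℕ) : ℝ) • fgb ℓ g d ↑b) = x
    rw [← hx]
    exact Finset.sum_congr rfl fun b _ => by rw [hall b]; push_cast; ring_nf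

lemma card_interior {ℓ g d : ℕ} (hg : 0 < g) (hd : 0 < d) (hgd : g * d = ℓ + 1)
    (q m : ℕ) (hq : 0 < q) (hqm : q = d * m) :
    Nat.card {x : Fin (ℓ + 1) → ℝ //
        x ∈ (q : ℝ) • intrinsicInterior ℝ
          (convexHull ℝ {v : Fin (ℓ + 1) → ℝ | ∃ b < g, v = fgb ℓ g d b}) ∧
        x ∈ ZA ℓ} = Nat.card {c : Fin g → ℕ // (∑ b, c b) + g = m} := by
  have hd0 : (d : ℝ) ≠ 0 := Nat.cast_ne_zero.2 hd.ne'
  have hdpos : (0 : ℝ) < d := by positivity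
  have hmq : (q : ℝ) = (d : ℝ) * m := by exact_mod_cast hqm
  refine Nat.card_congr (Equiv.symm (Equiv.ofBijective
    (fun c => ⟨∑ b, ((d * (c.1 b + 1) : ℕ) : ℝ) • fgb ℓ g d ↑b, ?_, ?_⟩) ⟨?_, ?_⟩))
  · refine (memq_int_iff hg hd hgd hq).2 ⟨fun b => ((d * (c.1 b + 1) : ℕ) : ℝ),
      fun b => by
        show (0 : ℝ) < ((d * (c.1 b + 1) : ℕ) : ℝ)
        have := Nat.mul_pos hd (Nat.succ_pos (c.1 b))
        exact_mod_cast this, ?_, rfl⟩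
    have e1 : (∑ b, (c.1 b : ℝ)) + g = (m : ℝ) := by exact_mod_cast congrArg Nat.cast c.2
    have e2 : (∑ b : Fin g, ((c.1 b : ℝ) + 1)) = (m : ℝ) := by
      rw [Finset.sum_add_distrib, Finset.sum_const, card_univ, Fintype.card_fin,
        nsmul_eq_mul, mul_one]
      exact e1
    push_cast
    rw [← Finset.mul_sum, e2, ← hmq]
  · exact comb_mem_ZA hg hd hgd (fun b => c.1 b + 1)
  · rintro ⟨c1, hc1⟩ ⟨c2, hc2⟩ h
    have h' : (∑ b, ((d * (c1 b + 1) : ℕ) : ℝ) • fgb ℓ g d ↑b)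
        = ∑ b, ((d * (c2 b + 1) : ℕ) : ℝ) • fgb ℓ g d ↑b := congrArg Subtype.val h
    have esum : ∀ (c : Fin g → ℕ), (∑ b, c b) + g = m →
        (∑ b, ((d * (c b + 1) : ℕ) : ℝ)) = (d : ℝ) * m := by
      intro c hc
      have e1 : (∑ b, (c b : ℝ)) + g = (m : ℝ) := by exact_mod_cast congrArg Nat.cast hc
      have e2 : (∑ b : Fin g, ((c b : ℝ) + 1)) = (m : ℝ) := by
        rw [Finset.sum_add_distrib, Finset.sum_const, card_univ, Fintype.card_fin,
          nsmul_eq_mul, mul_one]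
        exact e1
      push_cast
      rw [← Finset.mul_sum, e2]
    have hw := indep hg hd hgd
      (fun b => ((d * (c1 b + 1) : ℕ) : ℝ) - ((d * (c2 b + 1) : ℕ) : ℝ))
      (by rw [Finset.sum_sub_distrib, esum c1 hc1, esum c2 hc2, sub_self])
      (by
        simp only [sub_smul, Finset.sum_sub_distrib, h']
        exact sub_self _)
    refine Subtype.ext (funext fun b => ?_)
    have := congrFun hw b
    simp only [Pi.zero_apply] at this
    have h5 : ((d * (c1 b + 1) : ℕ) : ℝ) = ((d * (c2 b + 1) : ℕ) : ℝ) := by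
      linarith [sub_eq_zero.1 this]
    have h6 : d * (c1 b + 1) = d * (c2 b + 1) := by exact_mod_cast h5
    have h7 := Nat.eq_of_mul_eq_mul_left hd h6
    show c1 b = c2 b
    omega
  · rintro ⟨x, hP, hZ⟩
    obtain ⟨μ, h0, h1, hx⟩ := (memq_int_iff hg hd hgd hq).1 hP
    obtain ⟨c, hcm, hall⟩ := exists_c hg hd hgd q m hmq μ (fun b => (h0 b).le) h1
      (by rw [hx]; exact hZ)
    have hcb : ∀ b, c b ≠ 0 := by
      intro b hb
      have h7 := h0 b
      rw [hall b, hb] at h7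
      simp at h7
    have hsum : (∑ b, (c b - 1)) + g = m := by
      have e3 : (∑ b : Fin g, (c b - 1)) + g = ∑ b : Fin g, ((c b - 1) + 1) := by
        rw [Finset.sum_add_distrib, Finset.sum_const, card_univ, Fintype.card_fin,
          smul_eq_mul, mul_one]
      have e4 : (∑ b : Fin g, ((c b - 1) + 1)) = ∑ b, c b :=
        Finset.sum_congr rfl fun b _ => by have := hcb b; omega
      rw [e3, e4, hcm]
    refine ⟨⟨fun b => c b - 1, hsum⟩, Subtype.ext ?_⟩
    show (∑ b, ((d * ((c b - 1) + 1) : ℕ) : ℝ) • fgb ℓ g d ↑b) = x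
    rw [← hx]
    refine Finset.sum_congr rfl fun b _ => ?_
    rw [hall b]
    have : (c b - 1) + 1 = c b := by have := hcb b; omega
    rw [this]
    push_cast
    ring_nf

-- ### the rational product identity
lemma final_ratio (g d m q : ℕ) (hg : 0 < g) (hd : 0 < d) (hm : 0 < m)
    (hqm : q = d * m) :
    (((if g ≤ m then (m - 1).choose (g - 1) else 0) : ℕ) : ℚ) =
      (∏ i ∈ range (g - 1), ((q : ℚ) - d * (i + 1))) /
        ((d : ℚ) ^ (g - 1) * Nat.factorial (g - 1)) := by
  have hd0 : (d : ℚ) ≠ 0 := Nat.cast_ne_zero.2 hd.ne'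
  have hq : (q : ℚ) = (d : ℚ) * m := by exact_mod_cast hqm
  have hprod : (∏ i ∈ range (g - 1), ((q : ℚ) - d * (i + 1)))
      = (d : ℚ) ^ (g - 1) * ∏ i ∈ range (g - 1), ((m : ℚ) - (i + 1)) := by
    calc (∏ i ∈ range (g - 1), ((q : ℚ) - d * (i + 1)))
        = ∏ i ∈ range (g - 1), ((d : ℚ) * ((m : ℚ) - (i + 1))) :=
          Finset.prod_congr rfl fun i _ => by rw [hq]; ring
      _ = (∏ _i ∈ range (g - 1), (d : ℚ)) * ∏ i ∈ range (g - 1), ((m : ℚ) - (i + 1)) :=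
          Finset.prod_mul_distrib
      _ = (d : ℚ) ^ (g - 1) * ∏ i ∈ range (g - 1), ((m : ℚ) - (i + 1)) := by
          rw [Finset.prod_const, card_range]
  rw [hprod, mul_div_mul_left _ _ (pow_ne_zero _ hd0)]
  have hfac0 : ((Nat.factorial (g - 1) : ℕ) : ℚ) ≠ 0 :=
    Nat.cast_ne_zero.2 (Nat.factorial_ne_zero _)
  by_cases h : g ≤ m
  · rw [if_pos h, eq_div_iff hfac0]
    have hnat : Nat.factorial (g - 1) * (m - 1).choose (g - 1)
        = ∏ i ∈ range (g - 1), (m - 1 - i) := by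
      rw [← Nat.descFactorial_eq_factorial_mul_choose, Nat.descFactorial_eq_prod_range]
    have hcast : ((∏ i ∈ range (g - 1), (m - 1 - i) : ℕ) : ℚ)
        = ∏ i ∈ range (g - 1), ((m : ℚ) - (i + 1)) := by
      rw [Nat.cast_prod]
      refine Finset.prod_congr rfl fun i hi => ?_
      have h8 : (1 + i) ≤ m := by have := mem_range.1 hi; omega
      rw [show m - 1 - i = m - (1 + i) from by omega, Nat.cast_sub h8]
      push_cast
      ring
    calc ((m - 1).choose (g - 1) : ℚ) * Nat.factorial (g - 1)
        = ((Nat.factorial (g - 1) * (m - 1).choose (g - 1) : ℕ) : ℚ) := by push_cast; ring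
      _ = _ := by rw [hnat, hcast]
  · rw [if_neg h]
    push_neg at h
    have h2 : m - 1 ∈ range (g - 1) := mem_range.2 (by omega)
    rw [Finset.prod_eq_zero h2 (by
      rw [show ((m - 1 : ℕ) : ℚ) = (m : ℚ) - 1 from by
        rw [Nat.cast_sub (by omega : 1 ≤ m)]; norm_num]
      ring)]
    simp

/-- In type `A_ℓ`, with `g · d = ℓ + 1` and
`P = conv{f^g_0, …, f^g_{g−1}}`, the Ehrhart counting function of `P` with respect to the
coweight lattice `Z` satisfies `#(qP ∩ Z) = 0` if `d ∤ q` and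
`#(qP ∩ Z) = C(g − 1 + q/d, g − 1)` if `d ∣ q`; consequently for the relative interior `P°`,
`#(qP° ∩ Z) = 0` if `d ∤ q` and
`#(qP° ∩ Z) = (q − d)(q − 2d)⋯(q − d(g−1)) / (d^{g−1} (g−1)!)` if `d ∣ q`. -/
theorem stmt_18 {ℓ : ℕ} (hℓ : 0 < ℓ) (g d : ℕ) (hg : 0 < g) (hd : 0 < d)
    (hgd : g * d = ℓ + 1) (q : ℕ) (hq : 0 < q) :
    (¬ d ∣ q →
      Nat.card {x : Fin (ℓ + 1) → ℝ //
        x ∈ (q : ℝ) • convexHull ℝ {v : Fin (ℓ + 1) → ℝ | ∃ b < g, v = fgb ℓ g d b} ∧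
        x ∈ ZA ℓ} = 0) ∧
    (d ∣ q →
      Nat.card {x : Fin (ℓ + 1) → ℝ //
        x ∈ (q : ℝ) • convexHull ℝ {v : Fin (ℓ + 1) → ℝ | ∃ b < g, v = fgb ℓ g d b} ∧
        x ∈ ZA ℓ} = Nat.choose (g - 1 + q / d) (g - 1)) ∧
    (¬ d ∣ q →
      Nat.card {x : Fin (ℓ + 1) → ℝ //
        x ∈ (q : ℝ) • intrinsicInterior ℝ
          (convexHull ℝ {v : Fin (ℓ + 1) → ℝ | ∃ b < g, v = fgb ℓ g d b}) ∧
        x ∈ ZA ℓ} = 0) ∧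
    (d ∣ q →
      (Nat.card {x : Fin (ℓ + 1) → ℝ //
        x ∈ (q : ℝ) • intrinsicInterior ℝ
          (convexHull ℝ {v : Fin (ℓ + 1) → ℝ | ∃ b < g, v = fgb ℓ g d b}) ∧
        x ∈ ZA ℓ} : ℚ) =
      (∏ i ∈ Finset.range (g - 1), ((q : ℚ) - d * (i + 1))) /
        ((d : ℚ) ^ (g - 1) * Nat.factorial (g - 1))) := by
  refine ⟨?_, ?_, ?_, ?_⟩
  · intro hnd
    have he : IsEmpty {x : Fin (ℓ + 1) → ℝ //
        x ∈ (q : ℝ) • convexHull ℝ {v : Fin (ℓ + 1) → ℝ | ∃ b < g, v = fgb ℓ g d b} ∧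
        x ∈ ZA ℓ} :=
      ⟨fun p => (not_dvd_empty hg hd hgd q hq hnd p.1 p.2.1 p.2.2).elim⟩
    exact Nat.card_of_isEmpty
  · intro hdvd
    obtain ⟨m, hm⟩ := hdvd
    have hqd : q / d = m := by rw [hm]; exact Nat.mul_div_cancel_left m hd
    rw [hqd]
    exact card_closure hg hd hgd q m hq hm
  · intro hnd
    have he : IsEmpty {x : Fin (ℓ + 1) → ℝ //
        x ∈ (q : ℝ) • intrinsicInterior ℝ
          (convexHull ℝ {v : Fin (ℓ + 1) → ℝ | ∃ b < g, v = fgb ℓ g d b}) ∧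
        x ∈ ZA ℓ} :=
      ⟨fun p => (not_dvd_empty hg hd hgd q hq hnd p.1
        (Set.smul_set_mono intrinsicInterior_subset p.2.1) p.2.2).elim⟩
    exact Nat.card_of_isEmpty
  · intro hdvd
    obtain ⟨m, hm⟩ := hdvd
    have hm0 : 0 < m := by
      rcases m with _ | m
      · rw [Nat.mul_zero] at hm; omega
      · exact Nat.succ_pos _
    have hcard : Nat.card {x : Fin (ℓ + 1) → ℝ //
        x ∈ (q : ℝ) • intrinsicInterior ℝ
          (convexHull ℝ {v : Fin (ℓ + 1) → ℝ | ∃ b < g, v = fgb ℓ g d b}) ∧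
        x ∈ ZA ℓ} = if g ≤ m then (m - 1).choose (g - 1) else 0 := by
      rw [card_interior hg hd hgd q m hq hm]
      by_cases h : g ≤ m
      · rw [if_pos h]
        rw [Nat.card_congr (Equiv.subtypeEquivRight
          (fun c : Fin g → ℕ => (by omega : (∑ b, c b) + g = m ↔ ∑ b, c b = m - g)))]
        rw [card_sum_eq g (m - g) hg]
        congr 1
        omega
      · rw [if_neg h]
        push_neg at h
        have : IsEmpty {c : Fin g → ℕ // (∑ b, c b) + g = m} :=
          ⟨fun c => by have := c.2; omega⟩
        exact Nat.card_of_isEmpty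
    rw [hcard]
    exact final_ratio g d m q hg hd hm0 hm
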